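/- The substitution map f is well defined and injective on E(ω): if 𝚒, 𝚓 ∈ T(ω) satisfy Π(𝚒) = Π(𝚓), then Π(𝚒̃) = Π(𝚓̃); and if 𝚒, 𝚓 ∈ T(ω) satisfy Π(𝚒) ≠ Π(𝚓), then Π(𝚒̃) ≠ Π(𝚓̃). -/

import Mathlib

open MeasureTheory ProbabilityTheory Set Filter
open scoped ENNReal NNReal Topology Classical

noncomputable section

namespace FractalPercolation

/-! ### Words -/

/-- The finite word `𝚒|_n` obtained by truncating an infinite word. -/
def wordTake (d M : ℕ) (i : ℕ → Fin (M ^ d)) (n : ℕ) : List (Fin (M ^ d)) :=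
  List.ofFn fun k : Fin n => i k

/-- The shift `σ^n 𝚒` of an infinite word. -/
def shiftW (d M : ℕ) (n : ℕ) (i : ℕ → Fin (M ^ d)) : ℕ → Fin (M ^ d) := fun t => i (n + t)

/-- The concatenation `𝚠𝚖` of a finite word with an infinite word. -/
def extendW (d M : ℕ) (w : List (Fin (M ^ d))) (m : ℕ → Fin (M ^ d)) : ℕ → Fin (M ^ d) :=
  fun t => if h : t < w.length then w.get ⟨t, h⟩ else m (t - w.length)

/-! ### Geometry: cubes and the natural projection -/

/-- Lower-left corner of the `M`-adic cube labelled by the finite word `w`; the labelling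
`lab` sends a symbol to the vector of integer offsets (in `{0,…,M-1}^d`) of the corresponding
subcube. -/
def corner (d M : ℕ) (lab : Fin (M ^ d) → Fin d → Fin M) :
    List (Fin (M ^ d)) → Fin d → ℝ
  | [] => fun _ => 0
  | i :: w => fun k => ((lab i k : ℝ) + corner d M lab w k) / (M : ℝ)

/-- The closed `M`-adic cube `Q_𝚠 ⊆ [0,1]^d` labelled by the finite word `w`. -/
def cube (d M : ℕ) (lab : Fin (M ^ d) → Fin d → Fin M) (w : List (Fin (M ^ d))) :
    Set (Fin d → ℝ) :=
  {x | ∀ k, corner d M lab w k ≤ x k ∧ x k ≤ corner d M lab w k + ((M : ℝ) ^ w.length)⁻¹}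

/-- The homothety `h_{Q_𝚠}` sending `[0,1]^d` onto `Q_𝚠`. -/
def hQ (d M : ℕ) (lab : Fin (M ^ d) → Fin d → Fin M) (w : List (Fin (M ^ d)))
    (y : Fin d → ℝ) : Fin d → ℝ :=
  fun k => corner d M lab w k + ((M : ℝ) ^ w.length)⁻¹ * y k

/-- The natural projection `Π : Λ^ℕ → [0,1]^d`, `{Π(𝚒)} = ⋂_n Q_{𝚒|_n}`. -/
def PiInf (d M : ℕ) (lab : Fin (M ^ d) → Fin d → Fin M) (i : ℕ → Fin (M ^ d)) :
    Fin d → ℝ :=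
  fun k => ⨆ n, corner d M lab (wordTake d M i n) k

/-- The cube concentric with the cube of lower-left corner `c` and side length `ℓ`,
with side length `κ·ℓ`. -/
def concCube (d : ℕ) (c : Fin d → ℝ) (ℓ κ : ℝ) : Set (Fin d → ℝ) :=
  {x | ∀ k, c k + (1 - κ) * ℓ / 2 ≤ x k ∧ x k ≤ c k + (1 + κ) * ℓ / 2}

/-! ### The labelling -/

/-- The set `Λ_B` of labels of subcubes meeting the boundary. -/
def LamB (d M : ℕ) : Set (Fin (M ^ d)) := {i | (i : ℕ) < M ^ d - (M - 2) ^ d}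

/-- `lab` is a genuine labelling of the `M^d` subcubes such that the symbols in `Λ_B`
are exactly those of subcubes meeting the boundary of `[0,1]^d`. -/
def LabSpec (d M : ℕ) (lab : Fin (M ^ d) → Fin d → Fin M) : Prop :=
  Function.Bijective lab ∧
    ∀ i, i ∈ LamB d M ↔ ∃ k, (lab i k : ℕ) = 0 ∨ (lab i k : ℕ) = M - 1

/-! ### The percolation process -/

/-- The finite word `w` survives (i.e. `w ∈ T_{|w|}(ω)`): all its nonempty prefixes
are retained. -/
def Alive (d M : ℕ) {Ω : Type*} (X : List (Fin (M ^ d)) → Ω → Bool) (ω : Ω)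
    (w : List (Fin (M ^ d))) : Prop :=
  ∀ u : List (Fin (M ^ d)), u ≠ [] → u <+: w → X u ω = true

/-- The infinite word `𝚒` survives, i.e. `𝚒 ∈ T(ω)`. -/
def TInf (d M : ℕ) {Ω : Type*} (X : List (Fin (M ^ d)) → Ω → Bool) (ω : Ω)
    (i : ℕ → Fin (M ^ d)) : Prop :=
  ∀ n, Alive d M X ω (wordTake d M i n)

/-- The fractal percolation set `E(ω) = Π(T(ω))`. -/
def Eset (d M : ℕ) (lab : Fin (M ^ d) → Fin d → Fin M) {Ω : Type*}
    (X : List (Fin (M ^ d)) → Ω → Bool) (ω : Ω) : Set (Fin d → ℝ) :=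
  {x | ∃ i, TInf d M X ω i ∧ PiInf d M lab i = x}

/-- `(X_𝚒)_{𝚒∈Λ^*}` are i.i.d. Bernoulli(p) random variables under `P`. -/
def PercSpec (d M : ℕ) {Ω : Type*} [MeasurableSpace Ω] (P : Measure Ω)
    (X : List (Fin (M ^ d)) → Ω → Bool) (p : ℝ) : Prop :=
  (∀ w, Measurable (X w)) ∧
    iIndepFun X P ∧
    ∀ w, P {ω | X w ω = true} = ENNReal.ofReal p

/-- The σ-algebra `𝓑_n` generated by `{X_𝚒 : |𝚒| ≤ n}`. -/
def Bsig (d M : ℕ) {Ω : Type*} (X : List (Fin (M ^ d)) → Ω → Bool) (n : ℕ) :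
    MeasurableSpace Ω :=
  ⨆ w ∈ {w : List (Fin (M ^ d)) | w.length ≤ n}, MeasurableSpace.comap (X w) ⊤

/-! ### The substitution map -/

/-- All subcubes of `Q_𝚠` meeting the boundary of `Q_𝚠` die at the next step. -/
def BdryDead (d M : ℕ) {Ω : Type*} (X : List (Fin (M ^ d)) → Ω → Bool) (ω : Ω)
    (w : List (Fin (M ^ d))) : Prop :=
  ∀ j ∈ LamB d M, ¬ Alive d M X ω (w ++ [j])

/-- Auxiliary recursion for the substitution `𝚒 ↦ 𝚒̃`: `pfx` is the already processed
prefix of the original word. -/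
def substAux (d M : ℕ) {Ω : Type*} (X : List (Fin (M ^ d)) → Ω → Bool)
    (e : List (Fin (M ^ d))) (ω : Ω) :
    List (Fin (M ^ d)) → List (Fin (M ^ d)) → List (Fin (M ^ d))
  | _, [] => []
  | pfx, i :: rest =>
      (if BdryDead d M X ω pfx then e ++ [i] else [i]) ++
        substAux d M X e ω (pfx ++ [i]) rest

/-- The substitution `𝚠 ↦ 𝚠̃` (with substitution word `e = η`) applied to a finite word. -/
def substW (d M : ℕ) {Ω : Type*} (X : List (Fin (M ^ d)) → Ω → Bool)
    (e : List (Fin (M ^ d))) (ω : Ω) (w : List (Fin (M ^ d))) : List (Fin (M ^ d)) :=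
  substAux d M X e ω ([]) w

/-- The point `Π(𝚒̃)` for an infinite word `𝚒`. -/
def PiTilde (d M : ℕ) (lab : Fin (M ^ d) → Fin d → Fin M) {Ω : Type*}
    (X : List (Fin (M ^ d)) → Ω → Bool) (e : List (Fin (M ^ d))) (ω : Ω)
    (i : ℕ → Fin (M ^ d)) : Fin d → ℝ :=
  fun k => ⨆ n, corner d M lab (substW d M X e ω (wordTake d M i n)) k

/-- The image `F(ω) = f(E(ω))` of the substitution map. -/
def Fset (d M : ℕ) (lab : Fin (M ^ d) → Fin d → Fin M) {Ω : Type*}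
    (X : List (Fin (M ^ d)) → Ω → Bool) (e : List (Fin (M ^ d))) (ω : Ω) :
    Set (Fin d → ℝ) :=
  {x | ∃ i, TInf d M X ω i ∧ PiTilde d M lab X e ω i = x}

/-- The substitution word `e = η ∈ Λ^K` has length `K ≥ 1` and its first symbol labels
an inner cube. -/
def EtaSpec (d M K : ℕ) (e : List (Fin (M ^ d))) : Prop :=
  1 ≤ K ∧ e.length = K ∧ ∃ a l, e = a :: l ∧ a ∉ LamB d M

/-- `diam Q_𝚠 = M^{-|𝚠|}` (in the max-norm). -/
def diamQ (d M : ℕ) (w : List (Fin (M ^ d))) : ℝ := ((M : ℝ) ^ w.length)⁻¹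

/-- The quantity `κ(s,K)` from the paper. -/
def kappa (d M : ℕ) (p : ℝ) (K : ℕ) (s : ℝ) : ℝ :=
  1 - (((M : ℝ) - 2) ^ d / (M : ℝ) ^ d) * (1 - (M : ℝ) ^ (-(s * (K : ℝ)))) *
      (1 - p) ^ (M ^ d - (M - 2) ^ d)

/-- The quantity `κ' = lim_{K→∞} κ(s,K)` from the paper. -/
def kappa' (d M : ℕ) (p : ℝ) : ℝ :=
  1 - (((M : ℝ) - 2) ^ d / (M : ℝ) ^ d) * (1 - p) ^ (M ^ d - (M - 2) ^ d)

/-- The random sums `Y^t_n(ω) = Σ_{𝚒∈T_n(ω)} diam(Q_{𝚒̃})^t`. -/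
def Yt (d M : ℕ) {Ω : Type*} (X : List (Fin (M ^ d)) → Ω → Bool)
    (e : List (Fin (M ^ d))) (t : ℝ) (n : ℕ) (ω : Ω) : ℝ :=
  ∑ v : Fin n → Fin (M ^ d),
    if Alive d M X ω (List.ofFn v) then (diamQ d M (substW d M X e ω (List.ofFn v))) ^ t
    else 0

/-! ### Quasisymmetric maps -/

/-- `f` satisfies the quasisymmetry estimate with control function `η`. -/
def IsQSWith {α β : Type*} [PseudoMetricSpace α] [PseudoMetricSpace β]
    (η : ℝ≥0 → ℝ≥0) (f : α → β) : Prop :=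
  ∀ x y z : α, x ≠ z →
    nndist (f x) (f y) / nndist (f x) (f z) ≤ η (nndist x y / nndist x z)

/-- A homeomorphism is quasisymmetric if it admits a control function which is a
homeomorphism of `[0,∞)`. -/
def IsQSHomeo {α β : Type*} [MetricSpace α] [MetricSpace β] (f : α ≃ₜ β) : Prop :=
  ∃ η : ℝ≥0 ≃ₜ ℝ≥0, IsQSWith (⇑η) (⇑f)

/-! ### The auxiliary map g and the extension of f -/

/-- `g : [0,1]^d → [0,1]^d` is an `L`-bi-Lipschitz bijection of the unit cube, equal to the
identity on the boundary, mapping `I = (1-2/M)[0,1]^d` homothetically onto `(1-2/M)Q_η`. -/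
def GSpec (d M K : ℕ) (lab : Fin (M ^ d) → Fin d → Fin M) (e : List (Fin (M ^ d)))
    (L : ℝ) (g : (Fin d → ℝ) → (Fin d → ℝ)) : Prop :=
  Set.BijOn g (cube d M lab ([])) (cube d M lab ([])) ∧
    (∀ x ∈ cube d M lab ([]), ∀ y ∈ cube d M lab ([]),
      L⁻¹ * dist x y ≤ dist (g x) (g y) ∧ dist (g x) (g y) ≤ L * dist x y) ∧
    (∀ x ∈ frontier (cube d M lab ([] : List (Fin (M ^ d)))), g x = x) ∧
    (∃ v : Fin d → ℝ,
      ∀ x ∈ concCube d (fun _ => (0 : ℝ)) 1 (1 - 2 / (M : ℝ)),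
        g x = ((M : ℝ) ^ K)⁻¹ • x + v) ∧
    g '' concCube d (fun _ => (0 : ℝ)) 1 (1 - 2 / (M : ℝ)) =
      concCube d (corner d M lab e) (((M : ℝ) ^ K)⁻¹) (1 - 2 / (M : ℝ))

/-- `F` is (the coding of) the extension of the substitution map to `[0,1]^d`:
on surviving words it is the substitution map, and on a word whose largest surviving
prefix is `𝚒|_n` it is given by the two cases of the definition in the paper. -/
def ExtMapSpec (d M : ℕ) (lab : Fin (M ^ d) → Fin d → Fin M) {Ω : Type*}
    (X : List (Fin (M ^ d)) → Ω → Bool) (e : List (Fin (M ^ d)))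
    (g : (Fin d → ℝ) → (Fin d → ℝ)) (ω : Ω)
    (F : (ℕ → Fin (M ^ d)) → (Fin d → ℝ)) : Prop :=
  (∀ i, TInf d M X ω i → F i = PiTilde d M lab X e ω i) ∧
    ∀ (i : ℕ → Fin (M ^ d)) (n : ℕ),
      Alive d M X ω (wordTake d M i n) → ¬ Alive d M X ω (wordTake d M i (n + 1)) →
        ((∃ j ∈ LamB d M, Alive d M X ω (wordTake d M i n ++ [j])) →
          F i = hQ d M lab (substW d M X e ω (wordTake d M i n))
              (PiInf d M lab (shiftW d M n i))) ∧
        ((∀ j ∈ LamB d M, ¬ Alive d M X ω (wordTake d M i n ++ [j])) →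
          F i = hQ d M lab (substW d M X e ω (wordTake d M i n))
              (g (PiInf d M lab (shiftW d M n i))))

/-! ### Auxiliary lemmas for statement9 -/

section Aux

variable {d M : ℕ} {lab : Fin (M ^ d) → Fin d → Fin M}

lemma one_lt_M (hM : 3 ≤ M) : (1:ℝ) < (M:ℝ) := by
  exact_mod_cast Nat.lt_of_lt_of_le (by norm_num) hM

lemma M_pos (hM : 3 ≤ M) : (0:ℝ) < (M:ℝ) := lt_trans one_pos (one_lt_M hM)

lemma corner_nil (k : Fin d) : corner d M lab ([] : List (Fin (M ^ d))) k = 0 := rfl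

lemma corner_cons (a : Fin (M ^ d)) (w : List (Fin (M ^ d))) (k : Fin d) :
    corner d M lab (a :: w) k = ((lab a k : ℝ) + corner d M lab w k) / (M : ℝ) := rfl

lemma corner_nonneg (hM : 3 ≤ M) (w : List (Fin (M ^ d))) (k : Fin d) :
    0 ≤ corner d M lab w k := by
  induction w with
  | nil => simp [corner_nil]
  | cons a w ih =>
    rw [corner_cons]
    have h0 := M_pos hM
    have h1 : (0:ℝ) ≤ (lab a k : ℝ) := by positivity
    positivity

lemma corner_add_side_le_one (hM : 3 ≤ M) (w : List (Fin (M ^ d))) (k : Fin d) :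
    corner d M lab w k + ((M : ℝ) ^ w.length)⁻¹ ≤ 1 := by
  have h0 := M_pos hM
  induction w with
  | nil => simp [corner_nil]
  | cons a w ih =>
    have hla : (lab a k : ℝ) ≤ (M : ℝ) - 1 := by
      have hlt : (lab a k : ℕ) + 1 ≤ M := (lab a k).isLt
      have : ((lab a k : ℕ) : ℝ) + 1 ≤ (M:ℝ) := by exact_mod_cast hlt
      linarith
    rw [corner_cons, List.length_cons, pow_succ, mul_inv]
    have key : ((lab a k : ℝ) + corner d M lab w k) / M + ((M:ℝ) ^ w.length)⁻¹ * (M:ℝ)⁻¹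
        = ((lab a k : ℝ) + (corner d M lab w k + ((M:ℝ) ^ w.length)⁻¹)) / M := by
      field_simp
      ring
    rw [key]
    rw [div_le_one h0]
    linarith

lemma corner_le_one (hM : 3 ≤ M) (w : List (Fin (M ^ d))) (k : Fin d) :
    corner d M lab w k ≤ 1 := by
  have h := corner_add_side_le_one (lab := lab) hM w k
  have h0 := M_pos hM
  have : (0:ℝ) < ((M : ℝ) ^ w.length)⁻¹ := by positivity
  linarith

lemma corner_append (hM : 3 ≤ M) (w u : List (Fin (M ^ d))) (k : Fin d) :
    corner d M lab (w ++ u) k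
      = corner d M lab w k + ((M : ℝ) ^ w.length)⁻¹ * corner d M lab u k := by
  have h0 : (M:ℝ) ≠ 0 := ne_of_gt (M_pos hM)
  induction w with
  | nil => simp [corner_nil]
  | cons a w ih =>
    rw [List.cons_append, corner_cons, corner_cons, ih, List.length_cons, pow_succ, mul_inv]
    field_simp
    try ring

lemma corner_prefix_le (hM : 3 ≤ M) {u w : List (Fin (M ^ d))} (h : u <+: w) (k : Fin d) :
    corner d M lab u k ≤ corner d M lab w k := by
  obtain ⟨t, rfl⟩ := h
  rw [corner_append hM]
  have h1 := corner_nonneg (lab := lab) hM t k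
  have h2 : (0:ℝ) ≤ ((M : ℝ) ^ u.length)⁻¹ := by positivity
  nlinarith

lemma corner_den (hM : 3 ≤ M) (w : List (Fin (M ^ d))) (k : Fin d) :
    ∃ a : ℕ, corner d M lab w k = (a : ℝ) / (M : ℝ) ^ w.length := by
  have h0 : (M:ℝ) ≠ 0 := ne_of_gt (M_pos hM)
  induction w with
  | nil => exact ⟨0, by simp [corner_nil]⟩
  | cons a w ih =>
    obtain ⟨b, hb⟩ := ih
    refine ⟨(lab a k : ℕ) * M ^ w.length + b, ?_⟩
    rw [corner_cons, hb, List.length_cons, pow_succ]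
    push_cast
    field_simp
    try ring

lemma corner_gap (hM : 3 ≤ M) {u v : List (Fin (M ^ d))} (hlen : u.length = v.length)
    (k : Fin d) (hlt : corner d M lab u k < corner d M lab v k) :
    corner d M lab u k + ((M : ℝ) ^ u.length)⁻¹ ≤ corner d M lab v k := by
  have h0 : (0:ℝ) < (M:ℝ) ^ u.length := by have := M_pos hM; positivity
  obtain ⟨a, ha⟩ := corner_den (lab := lab) hM u k
  obtain ⟨b, hb⟩ := corner_den (lab := lab) hM v k
  rw [← hlen] at hb
  rw [ha, hb] at hlt ⊢
  have hab : (a : ℝ) < b := by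
    rw [div_lt_div_iff_of_pos_right h0] at hlt
    exact hlt
  have hab' : a < b := by exact_mod_cast hab
  have : (a : ℝ) + 1 ≤ (b : ℝ) := by exact_mod_cast hab'
  have h1 : (a:ℝ)/(M:ℝ)^u.length + ((M:ℝ)^u.length)⁻¹ = ((a:ℝ)+1)/(M:ℝ)^u.length := by
    field_simp
  rw [h1]
  gcongr

lemma wordTake_length (i : ℕ → Fin (M ^ d)) (n : ℕ) : (wordTake d M i n).length = n :=
  List.length_ofFn

lemma wordTake_zero (i : ℕ → Fin (M ^ d)) : wordTake d M i 0 = [] := rfl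

lemma wordTake_succ (i : ℕ → Fin (M ^ d)) (n : ℕ) :
    wordTake d M i (n + 1) = wordTake d M i n ++ [i n] := by
  rw [wordTake, List.ofFn_succ', List.concat_eq_append]
  simp [wordTake]

lemma wordTake_add (i : ℕ → Fin (M ^ d)) (n m : ℕ) :
    wordTake d M i (n + m) = wordTake d M i n ++ wordTake d M (shiftW d M n i) m := by
  induction m with
  | zero => simp [wordTake_zero]
  | succ m ih =>
    rw [show n + (m + 1) = (n + m) + 1 from rfl, wordTake_succ, ih, wordTake_succ,
      List.append_assoc]
    rfl

lemma chain_prefix (s : ℕ → List (Fin (M ^ d))) (hs : ∀ n, ∃ b, s (n + 1) = s n ++ b)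
    {a b : ℕ} (hab : a ≤ b) : s a <+: s b := by
  induction b with
  | zero =>
    have : a = 0 := Nat.le_zero.mp hab
    subst this; exact List.prefix_refl _
  | succ b ihb =>
    rcases Nat.lt_or_ge a (b + 1) with h | h
    · obtain ⟨t, ht⟩ := hs b
      rw [ht]
      exact (ihb (by omega)).trans (List.prefix_append _ _)
    · have : a = b + 1 := le_antisymm hab h
      subst this; exact List.prefix_refl _

lemma corner_bddAbove (hM : 3 ≤ M) (s : ℕ → List (Fin (M ^ d))) (k : Fin d) :
    BddAbove (Set.range fun n => corner d M lab (s n) k) :=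
  ⟨1, by rintro _ ⟨n, rfl⟩; exact corner_le_one hM _ _⟩

lemma chain_le_sup (hM : 3 ≤ M) (s : ℕ → List (Fin (M ^ d))) (k : Fin d) (n : ℕ) :
    corner d M lab (s n) k ≤ ⨆ m, corner d M lab (s m) k :=
  le_ciSup (corner_bddAbove hM s k) n

lemma sup_le_chain (hM : 3 ≤ M) (s : ℕ → List (Fin (M ^ d)))
    (hs : ∀ n, ∃ b, s (n + 1) = s n ++ b) (n : ℕ) (k : Fin d) :
    (⨆ m, corner d M lab (s m) k) ≤ corner d M lab (s n) k + ((M : ℝ) ^ (s n).length)⁻¹ := by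
  have hMpos := M_pos hM
  have h2 : (0:ℝ) ≤ ((M:ℝ) ^ (s n).length)⁻¹ := by positivity
  apply ciSup_le
  intro m
  rcases le_total m n with h | h
  · have := corner_prefix_le (lab := lab) hM (chain_prefix s hs h) k
    linarith
  · obtain ⟨t, ht⟩ := chain_prefix s hs h
    rw [← ht, corner_append hM]
    have h1 := corner_le_one (lab := lab) hM t k
    have h3 := corner_nonneg (lab := lab) hM t k
    nlinarith

lemma chain_mem_cube (hM : 3 ≤ M) (s : ℕ → List (Fin (M ^ d)))
    (hs : ∀ n, ∃ b, s (n + 1) = s n ++ b) (n : ℕ) :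
    (fun k => ⨆ m, corner d M lab (s m) k) ∈ cube d M lab (s n) := by
  simp only [cube, Set.mem_setOf_eq]
  exact fun k => ⟨chain_le_sup hM s k n, sup_le_chain hM s hs n k⟩

lemma wordTake_chain (i : ℕ → Fin (M ^ d)) :
    ∀ n, ∃ b, wordTake d M i (n + 1) = wordTake d M i n ++ b :=
  fun n => ⟨[i n], wordTake_succ i n⟩

lemma PiInf_mem_cube (hM : 3 ≤ M) (i : ℕ → Fin (M ^ d)) (n : ℕ) :
    PiInf d M lab i ∈ cube d M lab (wordTake d M i n) :=
  chain_mem_cube hM _ (wordTake_chain i) n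

lemma sup_chain_decomp (hM : 3 ≤ M) (s : ℕ → List (Fin (M ^ d))) (V : List (Fin (M ^ d)))
    (z : ℕ → Fin (M ^ d)) (k : Fin d)
    (h1 : ∀ n, ∃ m, s n <+: V ++ wordTake d M z m)
    (h2 : ∀ m, ∃ n, V ++ wordTake d M z m <+: s n) :
    (⨆ n, corner d M lab (s n) k)
      = corner d M lab V k + ((M : ℝ) ^ V.length)⁻¹ * PiInf d M lab z k := by
  have hMpos := M_pos hM
  set c : ℝ := ((M : ℝ) ^ V.length)⁻¹ with hc
  have hc0 : 0 < c := by positivity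
  have hzb := corner_bddAbove (lab := lab) hM (wordTake d M z) k
  have hPi : ∀ m, corner d M lab (wordTake d M z m) k ≤ PiInf d M lab z k :=
    fun m => le_ciSup hzb m
  apply le_antisymm
  · apply ciSup_le
    intro n
    obtain ⟨m, hm⟩ := h1 n
    calc corner d M lab (s n) k ≤ corner d M lab (V ++ wordTake d M z m) k :=
          corner_prefix_le hM hm k
      _ = corner d M lab V k + c * corner d M lab (wordTake d M z m) k := corner_append hM _ _ k
      _ ≤ corner d M lab V k + c * PiInf d M lab z k := by
          have := hPi m; nlinarith
  · set S := ⨆ n, corner d M lab (s n) k with hS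
    have key : ∀ m : ℕ, corner d M lab V k + c * PiInf d M lab z k ≤ S + c * ((M:ℝ)⁻¹) ^ m := by
      intro m
      obtain ⟨n, hn⟩ := h2 m
      have h3 : corner d M lab (V ++ wordTake d M z m) k ≤ S :=
        le_trans (corner_prefix_le hM hn k) (chain_le_sup hM s k n)
      have h4 : PiInf d M lab z k ≤ corner d M lab (wordTake d M z m) k + ((M:ℝ) ^ m)⁻¹ := by
        have := sup_le_chain (lab := lab) hM (wordTake d M z) (wordTake_chain z) m k
        rwa [wordTake_length] at this
      have h5 : ((M:ℝ) ^ m)⁻¹ = ((M:ℝ)⁻¹) ^ m := by rw [inv_pow]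
      have h6 := corner_append (lab := lab) hM V (wordTake d M z m) k
      have h7 := mul_le_mul_of_nonneg_left h4 (le_of_lt hc0)
      rw [mul_add, h5] at h7
      linarith
    have h8 : Filter.Tendsto (fun m : ℕ => ((M:ℝ)⁻¹) ^ m) Filter.atTop (nhds 0) := by
      apply tendsto_pow_atTop_nhds_zero_of_lt_one (by positivity)
      rw [inv_lt_one_iff₀]
      right; exact one_lt_M hM
    have hT : Filter.Tendsto (fun m : ℕ => S + c * ((M:ℝ)⁻¹) ^ m) Filter.atTop (nhds S) := by
      have := (h8.const_mul c).const_add S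
      simpa using this
    exact ge_of_tendsto' hT key

lemma corner_single (a : Fin (M ^ d)) (k : Fin d) :
    corner d M lab ([a]) k = (lab a k : ℝ) / M := by
  rw [corner_cons, corner_nil, add_zero]

lemma lab_le (hM : 3 ≤ M) (a : Fin (M ^ d)) (k : Fin d) :
    (lab a k : ℝ) ≤ (M : ℝ) - 1 := by
  have hlt : (lab a k : ℕ) + 1 ≤ M := (lab a k).isLt
  have : ((lab a k : ℕ) : ℝ) + 1 ≤ (M:ℝ) := by exact_mod_cast hlt
  linarith

lemma exists_corner_ne (hM : 3 ≤ M) (hinj : Function.Injective lab)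
    {u v : List (Fin (M ^ d))} (hlen : u.length = v.length) (hne : u ≠ v) :
    ∃ k, corner d M lab u k ≠ corner d M lab v k := by
  have hMpos := M_pos hM
  have hMne : (M:ℝ) ≠ 0 := ne_of_gt hMpos
  induction u generalizing v with
  | nil =>
    cases v with
    | nil => exact absurd rfl hne
    | cons b v => simp at hlen
  | cons a u ih =>
    cases v with
    | nil => simp at hlen
    | cons b v =>
      by_cases hab : a = b
      · subst hab
        have huv : u ≠ v := fun h => hne (by rw [h])
        have hlen' : u.length = v.length := by simpa using hlen
        obtain ⟨k, hk⟩ := ih hlen' huv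
        refine ⟨k, ?_⟩
        rw [corner_cons, corner_cons]
        intro hEq
        have h' := congrArg (fun y : ℝ => y * M) hEq
        simp only [div_mul_cancel₀ _ hMne] at h'
        exact hk (by linarith)
      · have hlabne : lab a ≠ lab b := fun h => hab (hinj h)
        obtain ⟨k, hk⟩ := Function.ne_iff.mp hlabne
        refine ⟨k, ?_⟩
        rw [corner_cons, corner_cons]
        intro hEq
        have h' := congrArg (fun y : ℝ => y * M) hEq
        simp only [div_mul_cancel₀ _ hMne] at h'
        have h1 := corner_add_side_le_one (lab := lab) hM u k
        have h2 := corner_add_side_le_one (lab := lab) hM v k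
        have h3 := corner_nonneg (lab := lab) hM u k
        have h4 := corner_nonneg (lab := lab) hM v k
        have h5 : (0:ℝ) < ((M:ℝ)^u.length)⁻¹ := by positivity
        have h6 : (0:ℝ) < ((M:ℝ)^v.length)⁻¹ := by positivity
        have hk' : (lab a k : ℕ) ≠ (lab b k : ℕ) := fun h => hk (Fin.ext h)
        rcases Nat.lt_or_ge (lab a k : ℕ) (lab b k : ℕ) with h | h
        · have hcast : ((lab a k : ℕ):ℝ) + 1 ≤ ((lab b k : ℕ):ℝ) := by exact_mod_cast h
          linarith
        · have hlt : (lab b k : ℕ) < (lab a k : ℕ) := lt_of_le_of_ne h (Ne.symm hk')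
          have hcast : ((lab b k : ℕ):ℝ) + 1 ≤ ((lab a k : ℕ):ℝ) := by exact_mod_cast hlt
          linarith

lemma extreme_of_two (hM : 3 ≤ M) (hinj : Function.Injective lab)
    {u v : List (Fin (M ^ d))} {x : Fin d → ℝ} (hlen : u.length = v.length) (hne : u ≠ v)
    (hxu : x ∈ cube d M lab u) (hxv : x ∈ cube d M lab v) :
    ∃ k, (x k = corner d M lab u k + ((M:ℝ) ^ u.length)⁻¹ ∧ x k = corner d M lab v k) ∨
         (x k = corner d M lab u k ∧ x k = corner d M lab v k + ((M:ℝ) ^ v.length)⁻¹) := by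
  obtain ⟨k, hk⟩ := exists_corner_ne hM hinj hlen hne
  simp only [cube, Set.mem_setOf_eq] at hxu hxv
  obtain ⟨hu1, hu2⟩ := hxu k
  obtain ⟨hv1, hv2⟩ := hxv k
  refine ⟨k, ?_⟩
  rcases lt_or_gt_of_ne hk with h | h
  · left
    have hg := corner_gap hM hlen k h
    constructor <;> linarith
  · right
    have hg := corner_gap hM hlen.symm k h
    have hlen2 : v.length = u.length := hlen.symm
    constructor <;> linarith

lemma mem_cube_of_prefix (hM : 3 ≤ M) {u w : List (Fin (M ^ d))} {x : Fin d → ℝ}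
    (h : u <+: w) (hx : x ∈ cube d M lab w) : x ∈ cube d M lab u := by
  obtain ⟨t, rfl⟩ := h
  simp only [cube, Set.mem_setOf_eq] at hx ⊢
  intro k
  obtain ⟨h1, h2⟩ := hx k
  have hMpos := M_pos hM
  have hc : (0:ℝ) ≤ ((M:ℝ)^u.length)⁻¹ := by positivity
  refine ⟨le_trans (corner_prefix_le hM (List.prefix_append u t) k) h1, ?_⟩
  rw [corner_append hM] at h2
  have h3 := corner_add_side_le_one (lab := lab) hM t k
  have h4 : ((M:ℝ)^(u ++ t).length)⁻¹ = ((M:ℝ)^u.length)⁻¹ * ((M:ℝ)^t.length)⁻¹ := by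
    rw [List.length_append, pow_add, mul_inv]
  rw [h4] at h2
  nlinarith [mul_le_mul_of_nonneg_left h3 hc]

lemma extreme_top_step (hM : 3 ≤ M) {x : Fin d → ℝ} {w : List (Fin (M ^ d))}
    {a : Fin (M ^ d)} {k : Fin d} (hx : x ∈ cube d M lab (w ++ [a]))
    (hw : x k = corner d M lab w k + ((M : ℝ) ^ w.length)⁻¹) :
    (lab a k : ℕ) = M - 1 ∧
      x k = corner d M lab (w ++ [a]) k + ((M : ℝ) ^ (w ++ [a]).length)⁻¹ := by
  have hMpos := M_pos hM
  have hMne : (M:ℝ) ≠ 0 := ne_of_gt hMpos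
  set n := w.length with hn
  have hlen : (w ++ [a]).length = n + 1 := by simp [hn]
  have hc : corner d M lab (w ++ [a]) k
      = corner d M lab w k + ((M:ℝ)^n)⁻¹ * ((lab a k : ℝ) / M) := by
    rw [corner_append hM, corner_single]
  simp only [cube, Set.mem_setOf_eq] at hx
  obtain ⟨hx1, hx2⟩ := hx k
  rw [hlen, hc, hw] at hx2
  have hpos : (0:ℝ) < ((M:ℝ)^n)⁻¹ := by positivity
  have hla := lab_le (lab := lab) hM a k
  have hpow : ((M:ℝ)^(n+1))⁻¹ = ((M:ℝ)^n)⁻¹ * (M:ℝ)⁻¹ := by rw [pow_succ, mul_inv]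
  rw [hpow] at hx2
  have hge : (M:ℝ) - 1 ≤ (lab a k : ℝ) := by
    have key : ((M:ℝ)^n)⁻¹ ≤ ((M:ℝ)^n)⁻¹ * (((lab a k:ℝ) + 1)/M) := by
      have hexp : ((M:ℝ)^n)⁻¹ * (((lab a k:ℝ) + 1)/M)
          = ((M:ℝ)^n)⁻¹ * ((lab a k:ℝ)/M) + ((M:ℝ)^n)⁻¹ * (M:ℝ)⁻¹ := by
        field_simp
        try ring
      rw [hexp]; linarith
    have h2 : (1:ℝ) ≤ ((lab a k:ℝ) + 1)/M := (le_mul_iff_one_le_right hpos).mp key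
    have h3 : (M:ℝ) ≤ (lab a k:ℝ) + 1 := (one_le_div hMpos).mp h2
    linarith
  have hEqR : (lab a k : ℝ) = (M:ℝ) - 1 := le_antisymm hla hge
  constructor
  · have : ((lab a k : ℕ) : ℝ) = ((M - 1 : ℕ) : ℝ) := by
      rw [Nat.cast_sub (by omega)]
      push_cast
      linarith
    exact_mod_cast this
  · rw [hlen, hc, hEqR, hpow, hw]
    field_simp
    try ring

lemma extreme_bot_step (hM : 3 ≤ M) {x : Fin d → ℝ} {w : List (Fin (M ^ d))}
    {a : Fin (M ^ d)} {k : Fin d} (hx : x ∈ cube d M lab (w ++ [a]))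
    (hw : x k = corner d M lab w k) :
    (lab a k : ℕ) = 0 ∧ x k = corner d M lab (w ++ [a]) k := by
  have hMpos := M_pos hM
  set n := w.length with hn
  have hc : corner d M lab (w ++ [a]) k
      = corner d M lab w k + ((M:ℝ)^n)⁻¹ * ((lab a k : ℝ) / M) := by
    rw [corner_append hM, corner_single]
  simp only [cube, Set.mem_setOf_eq] at hx
  obtain ⟨hx1, hx2⟩ := hx k
  rw [hc, hw] at hx1
  have hla0 : (0:ℝ) ≤ (lab a k : ℝ) := by positivity
  have hE2 : (lab a k : ℝ) = 0 := by
    by_contra hne0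
    have hgt : 0 < (lab a k:ℝ) := lt_of_le_of_ne hla0 (Ne.symm hne0)
    have : 0 < ((M:ℝ)^n)⁻¹ * ((lab a k:ℝ)/M) := by positivity
    linarith
  constructor
  · exact_mod_cast hE2
  · rw [hc, hE2, hw]
    simp

lemma extreme_top_append (hM : 3 ≤ M) {x : Fin d → ℝ} {k : Fin d}
    (t : List (Fin (M ^ d))) {w : List (Fin (M ^ d))}
    (hx : x ∈ cube d M lab (w ++ t))
    (hw : x k = corner d M lab w k + ((M : ℝ) ^ w.length)⁻¹) :
    (∀ a ∈ t, (lab a k : ℕ) = M - 1) ∧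
      x k = corner d M lab (w ++ t) k + ((M : ℝ) ^ (w ++ t).length)⁻¹ := by
  induction t generalizing w with
  | nil => exact ⟨by simp, by simpa using hw⟩
  | cons a t ih =>
    have hpre : (w ++ [a]) <+: (w ++ a :: t) := ⟨t, by simp⟩
    have hx1 : x ∈ cube d M lab (w ++ [a]) := mem_cube_of_prefix hM hpre hx
    obtain ⟨h1, h2⟩ := extreme_top_step hM hx1 hw
    have hx2 : x ∈ cube d M lab ((w ++ [a]) ++ t) := by simpa [List.append_assoc] using hx
    obtain ⟨h3, h4⟩ := ih hx2 h2
    refine ⟨?_, by simpa [List.append_assoc] using h4⟩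
    intro b hb
    rcases List.mem_cons.mp hb with rfl | hb
    · exact h1
    · exact h3 b hb

lemma extreme_bot_append (hM : 3 ≤ M) {x : Fin d → ℝ} {k : Fin d}
    (t : List (Fin (M ^ d))) {w : List (Fin (M ^ d))}
    (hx : x ∈ cube d M lab (w ++ t))
    (hw : x k = corner d M lab w k) :
    (∀ a ∈ t, (lab a k : ℕ) = 0) ∧ x k = corner d M lab (w ++ t) k := by
  induction t generalizing w with
  | nil => exact ⟨by simp, by simpa using hw⟩
  | cons a t ih =>
    have hpre : (w ++ [a]) <+: (w ++ a :: t) := ⟨t, by simp⟩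
    have hx1 : x ∈ cube d M lab (w ++ [a]) := mem_cube_of_prefix hM hpre hx
    obtain ⟨h1, h2⟩ := extreme_bot_step hM hx1 hw
    have hx2 : x ∈ cube d M lab ((w ++ [a]) ++ t) := by simpa [List.append_assoc] using hx
    obtain ⟨h3, h4⟩ := ih hx2 h2
    refine ⟨?_, by simpa [List.append_assoc] using h4⟩
    intro b hb
    rcases List.mem_cons.mp hb with rfl | hb
    · exact h1
    · exact h3 b hb

section Subst

variable {Ω : Type*} (X : List (Fin (M ^ d)) → Ω → Bool) (e : List (Fin (M ^ d))) (ω : Ω)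

lemma substAux_append (pfx u v : List (Fin (M ^ d))) :
    substAux d M X e ω pfx (u ++ v)
      = substAux d M X e ω pfx u ++ substAux d M X e ω (pfx ++ u) v := by
  induction u generalizing pfx with
  | nil => simp [substAux]
  | cons a u ih =>
    simp only [List.cons_append, substAux, List.append_eq, ih (pfx ++ [a]),
      List.append_assoc, List.singleton_append, List.nil_append]

lemma substW_snoc (w : List (Fin (M ^ d))) (a : Fin (M ^ d)) :
    substW d M X e ω (w ++ [a])
      = substW d M X e ω w ++ (if BdryDead d M X ω w then e ++ [a] else [a]) := by
  unfold substW
  rw [substAux_append]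
  simp [substAux]

variable (i : ℕ → Fin (M ^ d))

lemma substW_chain : ∀ n, ∃ b, substW d M X e ω (wordTake d M i (n + 1))
    = substW d M X e ω (wordTake d M i n) ++ b :=
  fun n => ⟨_, by rw [wordTake_succ, substW_snoc]⟩

lemma PiTilde_mem_cube (hM : 3 ≤ M) (n : ℕ) :
    PiTilde d M lab X e ω i ∈ cube d M lab (substW d M X e ω (wordTake d M i n)) := by
  have := chain_mem_cube (lab := lab) hM (fun n => substW d M X e ω (wordTake d M i n))
    (substW_chain X e ω i) n
  exact this

/-- The substituted word of `w`, extended by `e` if all boundary subcubes of `Q_w` die. -/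
def VW (w : List (Fin (M ^ d))) : List (Fin (M ^ d)) :=
  substW d M X e ω w ++ (if BdryDead d M X ω w then e else [])

lemma substW_take_succ_eq (N : ℕ) :
    substW d M X e ω (wordTake d M i (N + 1)) = VW X e ω (wordTake d M i N) ++ [i N] := by
  rw [wordTake_succ, substW_snoc, VW]
  by_cases hB : BdryDead d M X ω (wordTake d M i N)
  · simp [hB, List.append_assoc]
  · simp [hB]

lemma wordTake_one (z : ℕ → Fin (M ^ d)) : wordTake d M z 1 = [z 0] := by
  rw [show (1:ℕ) = 0 + 1 from rfl, wordTake_succ, wordTake_zero]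
  simp

lemma substW_take_decomp (N : ℕ)
    (hnb : ∀ n, N + 1 ≤ n → ¬ BdryDead d M X ω (wordTake d M i n)) :
    ∀ m, 1 ≤ m → substW d M X e ω (wordTake d M i (N + m))
      = VW X e ω (wordTake d M i N) ++ wordTake d M (shiftW d M N i) m := by
  intro m hm
  induction m, hm using Nat.le_induction with
  | base =>
    rw [substW_take_succ_eq, wordTake_one]
    rfl
  | succ m hm ih =>
    rw [show N + (m + 1) = (N + m) + 1 from rfl, wordTake_succ, substW_snoc,
      if_neg (hnb (N + m) (by omega)), ih, wordTake_succ, List.append_assoc]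
    rfl

lemma PiTilde_decomp (hM : 3 ≤ M) (N : ℕ)
    (hnb : ∀ n, N + 1 ≤ n → ¬ BdryDead d M X ω (wordTake d M i n)) (k : Fin d) :
    PiTilde d M lab X e ω i k
      = corner d M lab (VW X e ω (wordTake d M i N)) k
        + ((M : ℝ) ^ (VW X e ω (wordTake d M i N)).length)⁻¹
            * PiInf d M lab (shiftW d M N i) k := by
  show (⨆ n, corner d M lab (substW d M X e ω (wordTake d M i n)) k) = _
  apply sup_chain_decomp hM _ _ _ k
  · intro n
    refine ⟨max (n - N) 1, ?_⟩
    have h1 : n ≤ N + max (n - N) 1 := by omega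
    have h2 := chain_prefix (fun n => substW d M X e ω (wordTake d M i n)) (substW_chain X e ω i) h1
    have h3 : substW d M X e ω (wordTake d M i n)
        <+: substW d M X e ω (wordTake d M i (N + max (n - N) 1)) := h2
    rwa [substW_take_decomp X e ω i N hnb _ (le_max_right _ _)] at h3
  · intro m
    rcases Nat.eq_zero_or_pos m with rfl | hm
    · refine ⟨N + 1, ?_⟩
      rw [substW_take_decomp X e ω i N hnb 1 le_rfl, wordTake_zero, List.append_nil]
      exact List.prefix_append _ _
    · refine ⟨N + m, ?_⟩
      rw [substW_take_decomp X e ω i N hnb m hm]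

lemma PiInf_decomp (hM : 3 ≤ M) (N : ℕ) (k : Fin d) :
    PiInf d M lab i k = corner d M lab (wordTake d M i N) k
      + ((M : ℝ) ^ N)⁻¹ * PiInf d M lab (shiftW d M N i) k := by
  have key := sup_chain_decomp (lab := lab) hM (fun n => wordTake d M i n)
    (wordTake d M i N) (shiftW d M N i) k ?_ ?_
  · rw [wordTake_length] at key
    exact key
  · intro n
    rcases le_total n N with h | h
    · refine ⟨0, ?_⟩
      rw [wordTake_zero, List.append_nil]
      exact chain_prefix _ (wordTake_chain i) h
    · refine ⟨n - N, ?_⟩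
      rw [← wordTake_add, Nat.add_sub_cancel' h]
  · intro m
    refine ⟨N + m, ?_⟩
    rw [← wordTake_add]

end Subst

lemma top_blocks (hM : 3 ≤ M) {x : Fin d → ℝ} (s blk : ℕ → List (Fin (M ^ d)))
    (hs : ∀ n, s (n + 1) = s n ++ blk n) (hx : ∀ n, x ∈ cube d M lab (s n)) (N : ℕ) (k : Fin d)
    (h0 : x k = corner d M lab (s (N + 1)) k + ((M : ℝ) ^ (s (N + 1)).length)⁻¹) :
    ∀ n, N + 1 ≤ n → ∀ a ∈ blk n, (lab a k : ℕ) = M - 1 := by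
  have inv : ∀ n, N + 1 ≤ n → x k = corner d M lab (s n) k + ((M:ℝ) ^ (s n).length)⁻¹ := by
    intro n hn
    induction n, hn using Nat.le_induction with
    | base => exact h0
    | succ n hn ih =>
      have hx' : x ∈ cube d M lab (s n ++ blk n) := by rw [← hs n]; exact hx (n + 1)
      have h2 := (extreme_top_append hM (blk n) hx' ih).2
      rwa [← hs n] at h2
  intro n hn
  have hx' : x ∈ cube d M lab (s n ++ blk n) := by rw [← hs n]; exact hx (n + 1)
  exact (extreme_top_append hM (blk n) hx' (inv n hn)).1

lemma bot_blocks (hM : 3 ≤ M) {x : Fin d → ℝ} (s blk : ℕ → List (Fin (M ^ d)))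
    (hs : ∀ n, s (n + 1) = s n ++ blk n) (hx : ∀ n, x ∈ cube d M lab (s n)) (N : ℕ) (k : Fin d)
    (h0 : x k = corner d M lab (s (N + 1)) k) :
    ∀ n, N + 1 ≤ n → ∀ a ∈ blk n, (lab a k : ℕ) = 0 := by
  have inv : ∀ n, N + 1 ≤ n → x k = corner d M lab (s n) k := by
    intro n hn
    induction n, hn using Nat.le_induction with
    | base => exact h0
    | succ n hn ih =>
      have hx' : x ∈ cube d M lab (s n ++ blk n) := by rw [← hs n]; exact hx (n + 1)
      have h2 := (extreme_bot_append hM (blk n) hx' ih).2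
      rwa [← hs n] at h2
  intro n hn
  have hx' : x ∈ cube d M lab (s n ++ blk n) := by rw [← hs n]; exact hx (n + 1)
  exact (extreme_bot_append hM (blk n) hx' (inv n hn)).1

lemma main_iff {Ω : Type*} (X : List (Fin (M ^ d)) → Ω → Bool) (e : List (Fin (M ^ d))) (ω : Ω)
    (hM : 3 ≤ M) (hlab : LabSpec d M lab) {K : ℕ} (he : EtaSpec d M K e)
    (i j : ℕ → Fin (M ^ d)) (hi : TInf d M X ω i) (hj : TInf d M X ω j) :
    PiInf d M lab i = PiInf d M lab j ↔
      PiTilde d M lab X e ω i = PiTilde d M lab X e ω j := by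
  by_cases hij : i = j
  · subst hij; simp
  have hex : ∃ n, i n ≠ j n := Function.ne_iff.mp hij
  set N := Nat.find hex with hNdef
  have hN : i N ≠ j N := Nat.find_spec hex
  have hmin : ∀ t, t < N → i t = j t := fun t ht => not_not.mp (Nat.find_min hex ht)
  have hpreL : wordTake d M i N = wordTake d M j N := by
    unfold wordTake
    exact congrArg List.ofFn (funext fun t => hmin t t.isLt)
  have hMpos := M_pos hM
  have hinj : Function.Injective lab := hlab.1.injective
  have htakene : wordTake d M i (N + 1) ≠ wordTake d M j (N + 1) := by
    rw [wordTake_succ, wordTake_succ, hpreL]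
    intro hEq
    exact hN (by simpa using List.append_cancel_left hEq)
  have hlen1 : (wordTake d M i (N + 1)).length = (wordTake d M j (N + 1)).length := by
    rw [wordTake_length, wordTake_length]
  -- no boundary-death along the tails, from equality of the projections
  have hA : PiInf d M lab i = PiInf d M lab j →
      (∀ n, N + 1 ≤ n → ¬ BdryDead d M X ω (wordTake d M i n)) ∧
      (∀ n, N + 1 ≤ n → ¬ BdryDead d M X ω (wordTake d M j n)) := by
    intro hEq
    have hxi : ∀ n, PiInf d M lab i ∈ cube d M lab (wordTake d M i n) :=
      fun n => PiInf_mem_cube hM i n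
    have hxj : ∀ n, PiInf d M lab i ∈ cube d M lab (wordTake d M j n) := by
      intro n; rw [hEq]; exact PiInf_mem_cube hM j n
    obtain ⟨k, hc⟩ := extreme_of_two hM hinj hlen1 htakene (hxi (N + 1)) (hxj (N + 1))
    have hsi : ∀ n, wordTake d M i (n + 1) = wordTake d M i n ++ [i n] := wordTake_succ i
    have hsj : ∀ n, wordTake d M j (n + 1) = wordTake d M j n ++ [j n] := wordTake_succ j
    rcases hc with ⟨h1, h2⟩ | ⟨h1, h2⟩
    · constructor
      · intro n hn hBd
        have hLi := top_blocks hM (fun n => wordTake d M i n) (fun n => [i n]) hsi hxi N k h1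
          n hn (i n) (List.mem_singleton_self _)
        exact hBd (i n) ((hlab.2 (i n)).mpr ⟨k, Or.inr hLi⟩)
          (by rw [← wordTake_succ]; exact hi (n + 1))
      · intro n hn hBd
        have hLj := bot_blocks hM (fun n => wordTake d M j n) (fun n => [j n]) hsj hxj N k h2
          n hn (j n) (List.mem_singleton_self _)
        exact hBd (j n) ((hlab.2 (j n)).mpr ⟨k, Or.inl hLj⟩)
          (by rw [← wordTake_succ]; exact hj (n + 1))
    · constructor
      · intro n hn hBd
        have hLi := bot_blocks hM (fun n => wordTake d M i n) (fun n => [i n]) hsi hxi N k h1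
          n hn (i n) (List.mem_singleton_self _)
        exact hBd (i n) ((hlab.2 (i n)).mpr ⟨k, Or.inl hLi⟩)
          (by rw [← wordTake_succ]; exact hi (n + 1))
      · intro n hn hBd
        have hLj := top_blocks hM (fun n => wordTake d M j n) (fun n => [j n]) hsj hxj N k h2
          n hn (j n) (List.mem_singleton_self _)
        exact hBd (j n) ((hlab.2 (j n)).mpr ⟨k, Or.inr hLj⟩)
          (by rw [← wordTake_succ]; exact hj (n + 1))
  -- no boundary-death along the tails, from equality of the substituted projections
  have hB : PiTilde d M lab X e ω i = PiTilde d M lab X e ω j →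
      (∀ n, N + 1 ≤ n → ¬ BdryDead d M X ω (wordTake d M i n)) ∧
      (∀ n, N + 1 ≤ n → ¬ BdryDead d M X ω (wordTake d M j n)) := by
    intro hEq
    obtain ⟨hK1, hKlen, a, l, hel, haB⟩ := he
    have hsi : ∀ n, substW d M X e ω (wordTake d M i (n + 1))
        = substW d M X e ω (wordTake d M i n)
          ++ (if BdryDead d M X ω (wordTake d M i n) then e ++ [i n] else [i n]) := by
      intro n; rw [wordTake_succ, substW_snoc]
    have hsj : ∀ n, substW d M X e ω (wordTake d M j (n + 1))
        = substW d M X e ω (wordTake d M j n)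
          ++ (if BdryDead d M X ω (wordTake d M j n) then e ++ [j n] else [j n]) := by
      intro n; rw [wordTake_succ, substW_snoc]
    have hyi : ∀ n, PiTilde d M lab X e ω i ∈
        cube d M lab (substW d M X e ω (wordTake d M i n)) :=
      fun n => PiTilde_mem_cube X e ω i hM n
    have hyj : ∀ n, PiTilde d M lab X e ω i ∈
        cube d M lab (substW d M X e ω (wordTake d M j n)) := by
      intro n; rw [hEq]; exact PiTilde_mem_cube X e ω j hM n
    have hlen2 : (substW d M X e ω (wordTake d M i (N + 1))).length
        = (substW d M X e ω (wordTake d M j (N + 1))).length := by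
      rw [substW_take_succ_eq X e ω i N, substW_take_succ_eq X e ω j N, ← hpreL]
      simp
    have hne2 : substW d M X e ω (wordTake d M i (N + 1))
        ≠ substW d M X e ω (wordTake d M j (N + 1)) := by
      rw [substW_take_succ_eq X e ω i N, substW_take_succ_eq X e ω j N, ← hpreL]
      intro hEq2
      exact hN (by simpa using List.append_cancel_left hEq2)
    obtain ⟨k, hc⟩ := extreme_of_two hM hinj hlen2 hne2 (hyi (N + 1)) (hyj (N + 1))
    have hamem : ∀ b : Fin (M ^ d), a ∈ e ++ [b] :=
      fun b => List.mem_append_left _ (by rw [hel]; exact List.mem_cons_self)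
    rcases hc with ⟨h1, h2⟩ | ⟨h1, h2⟩
    · constructor
      · intro n hn hBd
        have hLi := top_blocks hM (fun n => substW d M X e ω (wordTake d M i n))
          (fun n => if BdryDead d M X ω (wordTake d M i n) then e ++ [i n] else [i n])
          hsi hyi N k h1 n hn a
          (by show a ∈ if BdryDead d M X ω (wordTake d M i n) then e ++ [i n] else [i n]
              rw [if_pos hBd]; exact hamem (i n))
        exact haB ((hlab.2 a).mpr ⟨k, Or.inr hLi⟩)
      · intro n hn hBd
        have hLj := bot_blocks hM (fun n => substW d M X e ω (wordTake d M j n))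
          (fun n => if BdryDead d M X ω (wordTake d M j n) then e ++ [j n] else [j n])
          hsj hyj N k h2 n hn a
          (by show a ∈ if BdryDead d M X ω (wordTake d M j n) then e ++ [j n] else [j n]
              rw [if_pos hBd]; exact hamem (j n))
        exact haB ((hlab.2 a).mpr ⟨k, Or.inl hLj⟩)
    · constructor
      · intro n hn hBd
        have hLi := bot_blocks hM (fun n => substW d M X e ω (wordTake d M i n))
          (fun n => if BdryDead d M X ω (wordTake d M i n) then e ++ [i n] else [i n])
          hsi hyi N k h1 n hn a
          (by show a ∈ if BdryDead d M X ω (wordTake d M i n) then e ++ [i n] else [i n]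
              rw [if_pos hBd]; exact hamem (i n))
        exact haB ((hlab.2 a).mpr ⟨k, Or.inl hLi⟩)
      · intro n hn hBd
        have hLj := top_blocks hM (fun n => substW d M X e ω (wordTake d M j n))
          (fun n => if BdryDead d M X ω (wordTake d M j n) then e ++ [j n] else [j n])
          hsj hyj N k h2 n hn a
          (by show a ∈ if BdryDead d M X ω (wordTake d M j n) then e ++ [j n] else [j n]
              rw [if_pos hBd]; exact hamem (j n))
        exact haB ((hlab.2 a).mpr ⟨k, Or.inr hLj⟩)
  constructor
  · intro hEq
    obtain ⟨hnbi, hnbj⟩ := hA hEq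
    funext k
    rw [PiTilde_decomp X e ω i hM N hnbi k, PiTilde_decomp X e ω j hM N hnbj k, ← hpreL]
    have h3 := congrFun hEq k
    rw [PiInf_decomp i hM N k, PiInf_decomp j hM N k, ← hpreL] at h3
    have hMne : ((M:ℝ) ^ N)⁻¹ ≠ 0 := by positivity
    have hsh : PiInf d M lab (shiftW d M N i) k = PiInf d M lab (shiftW d M N j) k :=
      mul_left_cancel₀ hMne (by linarith)
    rw [hsh]
  · intro hEq
    obtain ⟨hnbi, hnbj⟩ := hB hEq
    funext k
    rw [PiInf_decomp i hM N k, PiInf_decomp j hM N k, ← hpreL]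
    have h3 := congrFun hEq k
    rw [PiTilde_decomp X e ω i hM N hnbi k, PiTilde_decomp X e ω j hM N hnbj k, ← hpreL] at h3
    have hVne : ((M:ℝ) ^ (VW X e ω (wordTake d M i N)).length)⁻¹ ≠ 0 := by positivity
    have hsh : PiInf d M lab (shiftW d M N i) k = PiInf d M lab (shiftW d M N j) k :=
      mul_left_cancel₀ hVne (by linarith)
    rw [hsh]

end Aux

theorem statement9
    (d M : ℕ) (hd : 1 ≤ d) (hM : 3 ≤ M)
    (lab : Fin (M ^ d) → Fin d → Fin M) (hlab : LabSpec d M lab)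
    (K : ℕ) (e : List (Fin (M ^ d))) (he : EtaSpec d M K e)
    {Ω : Type*} (X : List (Fin (M ^ d)) → Ω → Bool) (ω : Ω)
    (i j : ℕ → Fin (M ^ d)) (hi : TInf d M X ω i) (hj : TInf d M X ω j) :
    (PiInf d M lab i = PiInf d M lab j →
      PiTilde d M lab X e ω i = PiTilde d M lab X e ω j) ∧
    (PiInf d M lab i ≠ PiInf d M lab j →
      PiTilde d M lab X e ω i ≠ PiTilde d M lab X e ω j) := by
  have hiff := main_iff X e ω hM hlab he i j hi hj
  exact ⟨fun h => hiff.mp h, fun h hT => h (hiff.mpr hT)⟩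

end FractalPercolation
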